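/- The three systems are equivalent: a sequent Γ is derivable in GL_Seq if and only if it has an ∞-proof in GL_∞, if and only if it has a circular proof in GL_circ. -/

import Mathlib

/-- Modal formulas in negation normal form. -/
inductive Fml : Type where
  | pos : ℕ → Fml
  | neg : ℕ → Fml
  | top : Fml
  | bot : Fml
  | and : Fml → Fml → Fml
  | or : Fml → Fml → Fml
  | box : Fml → Fml
  | dia : Fml → Fml
  deriving DecidableEq

/-- De Morgan negation. -/
def Fml.negation : Fml → Fml
  | .pos n => .neg n
  | .neg n => .pos n
  | .top => .bot
  | .bot => .top
  | .and A B => .or A.negation B.negation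
  | .or A B => .and A.negation B.negation
  | .box A => .dia A.negation
  | .dia A => .box A.negation

def Fml.imp (A B : Fml) : Fml := .or A.negation B
def Fml.biimp (A B : Fml) : Fml := .and (A.imp B) (B.imp A)
def Fml.boxdot (A : Fml) : Fml := .and A (.box A)

/-- Boolean evaluation, with modal subformulas evaluated via `m` (diamonds dually). -/
def Fml.eval (v : ℕ → Bool) (m : Fml → Bool) : Fml → Bool
  | .pos n => v n
  | .neg n => !(v n)
  | .top => true
  | .bot => false
  | .and A B => A.eval v m && B.eval v m
  | .or A B => A.eval v m || B.eval v m
  | .box A => m A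
  | .dia A => !(m A.negation)

/-- Boolean tautologies. -/
def Fml.Taut (A : Fml) : Prop := ∀ v m, A.eval v m = true

/-- The Hilbert system for Gödel–Löb logic GLH. -/
inductive GLH : Fml → Prop where
  | taut (A) : A.Taut → GLH A
  | distr (A B) : GLH ((Fml.box (A.imp B)).imp ((Fml.box A).imp (Fml.box B)))
  | lob (A) : GLH ((Fml.box ((Fml.box A).imp A)).imp (Fml.box A))
  | mp (A B) : GLH (A.imp B) → GLH A → GLH B
  | nec (A) : GLH A → GLH (Fml.box A)

/-- One-sided sequents: finite multisets of formulas. -/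
abbrev Sequent := Multiset Fml

/-- Prefix every formula of a sequent with ◇. -/
def diaS (Γ : Sequent) : Sequent := Γ.map Fml.dia

def listSharp : List Fml → Fml
  | [] => .bot
  | [A] => A
  | A :: l => .or A (listSharp l)

/-- Γ^♯ : the disjunction of the formulas of Γ (⊥ if Γ is empty). -/
noncomputable def sharp (Γ : Sequent) : Fml := listSharp Γ.toList

def listConj : List Fml → Fml
  | [] => .top
  | [A] => A
  | A :: l => .and A (listConj l)

/-- The sequent calculus GL_Seq. -/
inductive GLSeq : Sequent → Prop where
  | axA (Γ A) : GLSeq (A ::ₘ A.negation ::ₘ Γ)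
  | axTop (Γ) : GLSeq (Fml.top ::ₘ Γ)
  | andR {Γ A B} : GLSeq (A ::ₘ Γ) → GLSeq (B ::ₘ Γ) → GLSeq (Fml.and A B ::ₘ Γ)
  | orR {Γ A B} : GLSeq (A ::ₘ B ::ₘ Γ) → GLSeq (Fml.or A B ::ₘ Γ)
  | boxGL {Γ Δ A} : GLSeq (A ::ₘ Fml.dia A.negation ::ₘ (Γ + diaS Γ)) →
      GLSeq (Fml.box A ::ₘ (diaS Γ + Δ))

/-- One backward step of the K4-style rules: Γ is an initial sequent or the conclusion of
a rule all of whose premises lie in `S`. -/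
def InfStep (S : Set Sequent) (Γ : Sequent) : Prop :=
  (∃ Δ A, Γ = A ::ₘ Fml.negation A ::ₘ Δ) ∨
  (∃ Δ, Γ = Fml.top ::ₘ Δ) ∨
  (∃ Δ A B, Γ = Fml.and A B ::ₘ Δ ∧ (A ::ₘ Δ) ∈ S ∧ (B ::ₘ Δ) ∈ S) ∨
  (∃ Δ A B, Γ = Fml.or A B ::ₘ Δ ∧ (A ::ₘ B ::ₘ Δ) ∈ S) ∨
  (∃ Δ Θ A, Γ = Fml.box A ::ₘ (diaS Δ + Θ) ∧ (A ::ₘ (Δ + diaS Δ)) ∈ S)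

/-- GL_∞ : Γ has a (possibly non-well-founded) proof in the K4-style system, coinductively:
Γ belongs to some set of sequents each of which is an initial sequent or the conclusion
of a rule with premises in the set. -/
def GLInf (Γ : Sequent) : Prop := ∃ S : Set Sequent, Γ ∈ S ∧ ∀ Δ ∈ S, InfStep S Δ

/-- Circular derivability relative to a history of ancestor sequents available for back-links. -/
inductive GLCircAux : List Sequent → Sequent → Prop where
  | axA (H Γ A) : GLCircAux H (A ::ₘ A.negation ::ₘ Γ)
  | axTop (H Γ) : GLCircAux H (Fml.top ::ₘ Γ)
  | back {H Γ} : Γ ∈ H → GLCircAux H Γ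
  | andR {H Γ A B} : GLCircAux ((Fml.and A B ::ₘ Γ) :: H) (A ::ₘ Γ) →
      GLCircAux ((Fml.and A B ::ₘ Γ) :: H) (B ::ₘ Γ) → GLCircAux H (Fml.and A B ::ₘ Γ)
  | orR {H Γ A B} : GLCircAux ((Fml.or A B ::ₘ Γ) :: H) (A ::ₘ B ::ₘ Γ) →
      GLCircAux H (Fml.or A B ::ₘ Γ)
  | boxR {H Γ Δ A} : GLCircAux ((Fml.box A ::ₘ (diaS Γ + Δ)) :: H) (A ::ₘ (Γ + diaS Γ)) →
      GLCircAux H (Fml.box A ::ₘ (diaS Γ + Δ))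

/-- GL_circ : circular proofs. -/
def GLCirc (Γ : Sequent) : Prop := GLCircAux [] Γ

/-- Circular derivations with assumption leaves. `CircDer H b hs bhs Γ` : a circular
derivation of Γ, with ancestor history `H`, `b` true iff a □-rule occurs on the path from
the root, non-boxed assumption leaves `hs` and boxed assumption leaves `bhs`. -/
inductive CircDer : List Sequent → Bool → List Sequent → List Sequent → Sequent → Prop where
  | axA (H b Γ A) : CircDer H b [] [] (A ::ₘ A.negation ::ₘ Γ)
  | axTop (H b Γ) : CircDer H b [] [] (Fml.top ::ₘ Γ)
  | back {H Γ} (b) : Γ ∈ H → CircDer H b [] [] Γ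
  | hypU (H Γ) : CircDer H false [Γ] [] Γ
  | hypB (H Γ) : CircDer H true [] [Γ] Γ
  | andR {H b Γ A B hs₁ bhs₁ hs₂ bhs₂} :
      CircDer ((Fml.and A B ::ₘ Γ) :: H) b hs₁ bhs₁ (A ::ₘ Γ) →
      CircDer ((Fml.and A B ::ₘ Γ) :: H) b hs₂ bhs₂ (B ::ₘ Γ) →
      CircDer H b (hs₁ ++ hs₂) (bhs₁ ++ bhs₂) (Fml.and A B ::ₘ Γ)
  | orR {H b Γ A B hs bhs} :
      CircDer ((Fml.or A B ::ₘ Γ) :: H) b hs bhs (A ::ₘ B ::ₘ Γ) →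
      CircDer H b hs bhs (Fml.or A B ::ₘ Γ)
  | boxR {H b Γ Δ A hs bhs} :
      CircDer ((Fml.box A ::ₘ (diaS Γ + Δ)) :: H) true hs bhs (A ::ₘ (Γ + diaS Γ)) →
      CircDer H b hs bhs (Fml.box A ::ₘ (diaS Γ + Δ))

/-- Propositional atoms occurring in a formula. -/
def Fml.atoms : Fml → Finset ℕ
  | .pos n => {n}
  | .neg n => {n}
  | .top => ∅
  | .bot => ∅
  | .and A B => A.atoms ∪ B.atoms
  | .or A B => A.atoms ∪ B.atoms
  | .box A => A.atoms
  | .dia A => A.atoms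

/-- All literals occurring in a formula (a literal is an atom with a polarity). -/
def Fml.lits : Fml → Finset (ℕ × Bool)
  | .pos n => {(n, true)}
  | .neg n => {(n, false)}
  | .top => ∅
  | .bot => ∅
  | .and A B => A.lits ∪ B.lits
  | .or A B => A.lits ∪ B.lits
  | .box A => A.lits
  | .dia A => A.lits

/-- u(A) : literals occurring outside the scope of all modal operators. -/
def Fml.uvoc : Fml → Finset (ℕ × Bool)
  | .pos n => {(n, true)}
  | .neg n => {(n, false)}
  | .top => ∅
  | .bot => ∅
  | .and A B => A.uvoc ∪ B.uvoc
  | .or A B => A.uvoc ∪ B.uvoc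
  | .box _ => ∅
  | .dia _ => ∅

/-- v(A) : literals occurring within the scope of a modal operator (to be marked). -/
def Fml.vvoc : Fml → Finset (ℕ × Bool)
  | .and A B => A.vvoc ∪ B.vvoc
  | .or A B => A.vvoc ∪ B.vvoc
  | .box A => A.lits
  | .dia A => A.lits
  | _ => ∅

/-- w(A) = u(A) ∪ v(A)°, where the second Boolean component marks literals. -/
def Fml.wvoc (A : Fml) : Finset ((ℕ × Bool) × Bool) :=
  A.uvoc.image (fun L => (L, false)) ∪ A.vvoc.image (fun L => (L, true))

/-- w*(A) = w(A) ∪ w(A)°. -/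
def Fml.wstar (A : Fml) : Finset ((ℕ × Bool) × Bool) :=
  A.wvoc ∪ A.wvoc.image (fun p => (p.1, true))


/-! ### Development -/

namespace GLDev

/-- Size of a formula. -/
def fsize : Fml → ℕ
  | .pos _ => 1
  | .neg _ => 1
  | .top => 1
  | .bot => 1
  | .and A B => fsize A + fsize B + 1
  | .or A B => fsize A + fsize B + 1
  | .box A => fsize A + 1
  | .dia A => fsize A + 1

lemma fsize_pos (A : Fml) : 0 < fsize A := by cases A <;> simp [fsize]

@[simp] lemma negation_negation (A : Fml) : A.negation.negation = A := by
  induction A <;> simp [Fml.negation, *]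

/-- Kripke models: transitive, converse well-founded. -/
structure KM where
  W : Type
  R : W → W → Prop
  val : W → ℕ → Prop
  trans : Transitive R
  wf : WellFounded (flip R)

/-- Satisfaction. -/
def Sat (M : KM) : Fml → M.W → Prop
  | .pos n, w => M.val w n
  | .neg n, w => ¬ M.val w n
  | .top, _ => True
  | .bot, _ => False
  | .and A B, w => Sat M A w ∧ Sat M B w
  | .or A B, w => Sat M A w ∨ Sat M B w
  | .box A, w => ∀ v, M.R w v → Sat M A v
  | .dia A, w => ∃ v, M.R w v ∧ Sat M A v

lemma sat_negation (M : KM) (A : Fml) : ∀ w, (Sat M A.negation w ↔ ¬ Sat M A w) := by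
  induction A with
  | pos n => intro w; simp [Fml.negation, Sat]
  | neg n => intro w; simp [Fml.negation, Sat]
  | top => intro w; simp [Fml.negation, Sat]
  | bot => intro w; simp [Fml.negation, Sat]
  | and A B ihA ihB => intro w; simp [Fml.negation, Sat, ihA, ihB]; tauto
  | or A B ihA ihB => intro w; simp [Fml.negation, Sat, ihA, ihB]
  | box A ih => intro w; simp [Fml.negation, Sat, ih]
  | dia A ih => intro w; simp [Fml.negation, Sat, ih]

/-- Validity of a sequent. -/
def ValidS (Γ : Sequent) : Prop := ∀ (M : KM) (w : M.W), ∃ A ∈ Γ, Sat M A w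

lemma seq_to_valid {Γ : Sequent} (h : GLSeq Γ) : ValidS Γ := by
  induction h with
  | axA Γ A =>
    intro M w
    by_cases hA : Sat M A w
    · exact ⟨A, by simp, hA⟩
    · exact ⟨A.negation, by simp, (sat_negation M A w).2 hA⟩
  | axTop Γ =>
    intro M w
    exact ⟨Fml.top, by simp, trivial⟩
  | andR h1 h2 ih1 ih2 =>
    rename_i Γ A B
    intro M w
    obtain ⟨X, hX, hsX⟩ := ih1 M w
    rcases Multiset.mem_cons.1 hX with rfl | hX
    · obtain ⟨Y, hY, hsY⟩ := ih2 M w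
      rcases Multiset.mem_cons.1 hY with rfl | hY
      · exact ⟨Fml.and X Y, by simp, ⟨hsX, hsY⟩⟩
      · exact ⟨Y, by simp [hY], hsY⟩
    · exact ⟨X, by simp [hX], hsX⟩
  | orR h1 ih1 =>
    rename_i Γ A B
    intro M w
    obtain ⟨X, hX, hsX⟩ := ih1 M w
    rcases Multiset.mem_cons.1 hX with rfl | hX
    · exact ⟨Fml.or X B, by simp, Or.inl hsX⟩
    · rcases Multiset.mem_cons.1 hX with rfl | hX
      · exact ⟨Fml.or A X, by simp, Or.inr hsX⟩
      · exact ⟨X, by simp [hX], hsX⟩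
  | boxGL h1 ih1 =>
    rename_i Γ Δ A
    intro M w
    by_contra hcon
    push_neg at hcon
    have hboxA : ¬ Sat M (Fml.box A) w := hcon _ (by simp)
    have hdia : ∀ D ∈ Γ, ¬ Sat M (Fml.dia D) w := by
      intro D hD
      exact hcon _ (Multiset.mem_cons_of_mem (Multiset.mem_add.2 (Or.inl (Multiset.mem_map_of_mem _ hD))))
    simp only [Sat] at hboxA
    push_neg at hboxA
    obtain ⟨v0, hv0R, hv0A⟩ := hboxA
    -- pick an R-maximal such world
    have hne : Set.Nonempty {v | M.R w v ∧ ¬ Sat M A v} := ⟨v0, hv0R, hv0A⟩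
    obtain ⟨v, ⟨hvR, hvA⟩, hmax⟩ := M.wf.has_min _ hne
    obtain ⟨X, hX, hsX⟩ := ih1 M v
    rcases Multiset.mem_cons.1 hX with rfl | hX
    · exact hvA hsX
    rcases Multiset.mem_cons.1 hX with rfl | hX
    · -- X = ◇Ā : some u with R v u and Sat Ā u, but u is above v, so Sat A u
      obtain ⟨u, hvu, hu⟩ := hsX
      have hwu : M.R w u := M.trans hvR hvu
      have : u ∉ {v | M.R w v ∧ ¬ Sat M A v} := fun hu' => hmax u hu' hvu
      have hSatA : Sat M A u := by
        by_contra hnA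
        exact this ⟨hwu, hnA⟩
      exact (sat_negation M A u).1 hu hSatA
    rcases Multiset.mem_add.1 hX with hX | hX
    · -- X ∈ Γ : ◇X false at w, R w v gives X false at v
      exact (hdia X hX) ⟨v, hvR, hsX⟩
    · -- X ∈ diaS Γ : X = ◇D
      obtain ⟨D, hD, rfl⟩ := Multiset.mem_map.1 hX
      obtain ⟨u, hvu, hu⟩ := hsX
      exact (hdia D hD) ⟨u, M.trans hvR hvu, hu⟩

def seqsize (Γ : Sequent) : ℕ := (Γ.map fsize).sum

lemma seqsize_cons (a : Fml) (s : Sequent) : seqsize (a ::ₘ s) = fsize a + seqsize s := by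
  simp [seqsize]

lemma seqsize_add (s t : Sequent) : seqsize (s + t) = seqsize s + seqsize t := by
  simp [seqsize]

lemma inf_to_valid {Γ : Sequent} (h : GLInf Γ) : ValidS Γ := by
  obtain ⟨S, hΓ, hstep⟩ := h
  intro M w0
  suffices main : ∀ w : M.W, ∀ Γ' ∈ S, ∃ A ∈ Γ', Sat M A w by exact main w0 Γ hΓ
  intro w
  induction w using M.wf.induction with
  | _ w ihw =>
  suffices h : ∀ n, ∀ Γ' ∈ S, seqsize Γ' ≤ n → ∃ A ∈ Γ', Sat M A w by
    intro Γ' h'; exact h _ Γ' h' le_rfl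
  intro n
  induction n using Nat.strong_induction_on with
  | _ n ihn =>
  intro Γ' hΓ' hsz
  by_contra hcon
  push_neg at hcon
  rcases hstep Γ' hΓ' with ⟨Δ, A, rfl⟩ | ⟨Δ, rfl⟩ | ⟨Δ, A, B, rfl, h1, h2⟩ |
    ⟨Δ, A, B, rfl, h1⟩ | ⟨Δ, Θ, A, rfl, h1⟩
  · by_cases hA : Sat M A w
    · exact hcon A (by simp) hA
    · exact hcon A.negation (by simp) ((sat_negation M A w).2 hA)
  · exact hcon Fml.top (by simp) trivial
  · have hAB : ¬ Sat M (Fml.and A B) w := hcon _ (by simp)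
    simp only [Sat] at hAB
    have : (¬ Sat M A w) ∨ (¬ Sat M B w) := by tauto
    have hszΓ : 0 < seqsize (Fml.and A B ::ₘ Δ) := by
      rw [seqsize_cons]; have := fsize_pos (Fml.and A B); omega
    rcases this with hA | hB
    · have hlt : seqsize (A ::ₘ Δ) < n := by
        rw [seqsize_cons] at *
        have : fsize A < fsize (Fml.and A B) := by simp only [fsize]; omega
        omega
      obtain ⟨X, hX, hsX⟩ := ihn _ hlt (A ::ₘ Δ) h1 le_rfl
      rcases Multiset.mem_cons.1 hX with rfl | hX
      · exact hA hsX
      · exact hcon X (Multiset.mem_cons_of_mem hX) hsX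
    · have hlt : seqsize (B ::ₘ Δ) < n := by
        rw [seqsize_cons] at *
        have : fsize B < fsize (Fml.and A B) := by simp only [fsize]; omega
        omega
      obtain ⟨X, hX, hsX⟩ := ihn _ hlt (B ::ₘ Δ) h2 le_rfl
      rcases Multiset.mem_cons.1 hX with rfl | hX
      · exact hB hsX
      · exact hcon X (Multiset.mem_cons_of_mem hX) hsX
  · have hAB : ¬ Sat M (Fml.or A B) w := hcon _ (by simp)
    simp only [Sat] at hAB
    push_neg at hAB
    have hlt : seqsize (A ::ₘ B ::ₘ Δ) < n := by
      rw [seqsize_cons, seqsize_cons] at *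
      have : fsize A + fsize B < fsize (Fml.or A B) := by simp only [fsize]; omega
      omega
    obtain ⟨X, hX, hsX⟩ := ihn _ hlt (A ::ₘ B ::ₘ Δ) h1 le_rfl
    rcases Multiset.mem_cons.1 hX with rfl | hX
    · exact hAB.1 hsX
    rcases Multiset.mem_cons.1 hX with rfl | hX
    · exact hAB.2 hsX
    · exact hcon X (Multiset.mem_cons_of_mem hX) hsX
  · have hbox : ¬ Sat M (Fml.box A) w := hcon _ (by simp)
    simp only [Sat] at hbox
    push_neg at hbox
    obtain ⟨v, hwv, hvA⟩ := hbox
    have hdia : ∀ D ∈ Δ, ¬ Sat M (Fml.dia D) w := fun D hD =>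
      hcon _ (Multiset.mem_cons_of_mem (Multiset.mem_add.2 (Or.inl (Multiset.mem_map_of_mem _ hD))))
    obtain ⟨X, hX, hsX⟩ := ihw v hwv (A ::ₘ (Δ + diaS Δ)) h1
    rcases Multiset.mem_cons.1 hX with rfl | hX
    · exact hvA hsX
    rcases Multiset.mem_add.1 hX with hX | hX
    · exact (hdia X hX) ⟨v, hwv, hsX⟩
    · obtain ⟨D, hD, rfl⟩ := Multiset.mem_map.1 hX
      obtain ⟨u, hvu, hu⟩ := hsX
      exact (hdia D hD) ⟨u, M.trans hwv hvu, hu⟩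

/-- A history is OK if each entry is derivable relative to the entries after it. -/
def HistOK : List Sequent → Prop
  | [] => True
  | Sg :: H => GLCircAux H Sg ∧ HistOK H

lemma HistOK.cons' {H Sg} (h1 : GLCircAux H Sg) (h2 : HistOK H) : HistOK (Sg :: H) :=
  ⟨h1, h2⟩

lemma mem_hist {H : List Sequent} {Δ : Sequent} (hok : HistOK H) (hmem : Δ ∈ H) :
    ∃ H', H'.length < H.length ∧ HistOK H' ∧ GLCircAux H' Δ := by
  induction H with
  | nil => simp at hmem
  | cons Sg H ih =>
    rcases List.mem_cons.1 hmem with rfl | hmem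
    · exact ⟨H, by simp, hok.2, hok.1⟩
    · obtain ⟨H', hlen, h1, h2⟩ := ih hok.2 hmem
      exact ⟨H', lt_trans hlen (by simp), h1, h2⟩

lemma circ_to_inf {Γ : Sequent} (h : GLCirc Γ) : GLInf Γ := by
  set S : Set Sequent := {Δ | ∃ H, HistOK H ∧ GLCircAux H Δ} with hS
  have main : ∀ n (H : List Sequent) (Δ : Sequent), H.length ≤ n → HistOK H →
      GLCircAux H Δ → InfStep S Δ := by
    intro n
    induction n using Nat.strong_induction_on with
    | _ n ihn =>
    intro H Δ hlen hok hd
    cases hd with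
    | axA H Γ' A => exact Or.inl ⟨Γ', A, rfl⟩
    | axTop H Γ' => exact Or.inr (Or.inl ⟨Γ', rfl⟩)
    | back hmem =>
      obtain ⟨H', hlt, h1, h2⟩ := mem_hist hok hmem
      exact ihn H'.length (Nat.lt_of_lt_of_le hlt hlen) H' Δ le_rfl h1 h2
    | andR d1 d2 =>
      rename_i Γ' A B
      refine Or.inr (Or.inr (Or.inl ⟨Γ', A, B, rfl, ?_, ?_⟩))
      · exact ⟨_, HistOK.cons' (GLCircAux.andR d1 d2) hok, d1⟩
      · exact ⟨_, HistOK.cons' (GLCircAux.andR d1 d2) hok, d2⟩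
    | orR d =>
      rename_i Γ' A B
      exact Or.inr (Or.inr (Or.inr (Or.inl ⟨Γ', A, B, rfl,
        ⟨_, HistOK.cons' (GLCircAux.orR d) hok, d⟩⟩)))
    | boxR d =>
      rename_i Γ' Δ' A
      exact Or.inr (Or.inr (Or.inr (Or.inr ⟨Γ', Δ', A, rfl,
        ⟨_, HistOK.cons' (GLCircAux.boxR d) hok, d⟩⟩)))
  refine ⟨S, ⟨[], by simp [HistOK], h⟩, fun Δ hΔ => ?_⟩
  obtain ⟨H, hok, hd⟩ := hΔ
  exact main H.length H Δ le_rfl hok hd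

/-! #### Combining models -/

section Sum

variable {ι : Type} (Ms : ι → KM) (ws : ∀ i, (Ms i).W)

inductive SumR : Option (Σ i, (Ms i).W) → Option (Σ i, (Ms i).W) → Prop
  | root (i x) : (x = ws i ∨ (Ms i).R (ws i) x) → SumR none (some ⟨i, x⟩)
  | inner (i x y) : (Ms i).R x y → SumR (some ⟨i, x⟩) (some ⟨i, y⟩)

def sumKM (v0 : ℕ → Prop) : KM where
  W := Option (Σ i, (Ms i).W)
  R := SumR Ms ws
  val := fun w n => match w with
    | none => v0 n
    | some ⟨i, x⟩ => (Ms i).val x n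
  trans := by
    intro a b c hab hbc
    cases hab with
    | root i x h =>
      cases hbc with
      | inner i x y hxy =>
        refine SumR.root i y ?_
        rcases h with rfl | h
        · exact Or.inr hxy
        · exact Or.inr ((Ms i).trans h hxy)
    | inner i x y h =>
      cases hbc with
      | inner i y z hyz => exact SumR.inner i x z ((Ms i).trans h hyz)
  wf := by
    have hacc : ∀ (i) (x : (Ms i).W), Acc (flip (SumR Ms ws)) (some ⟨i, x⟩) := by
      intro i x
      induction x using (Ms i).wf.induction with
      | _ x ih =>
      constructor
      intro y hy
      cases hy with
      | inner i x y' h => exact ih y' h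
    constructor
    intro w
    match w with
    | none =>
      constructor
      intro y hy
      cases hy with
      | root i x h => exact hacc i x
    | some ⟨i, x⟩ => exact hacc i x

lemma sat_sum (v0 : ℕ → Prop) (A : Fml) :
    ∀ (i) (x : (Ms i).W), Sat (sumKM Ms ws v0) A (some ⟨i, x⟩) ↔ Sat (Ms i) A x := by
  induction A with
  | pos n => intro i x; exact Iff.rfl
  | neg n => intro i x; exact Iff.rfl
  | top => intro i x; exact Iff.rfl
  | bot => intro i x; exact Iff.rfl
  | and A B ihA ihB => intro i x; exact and_congr (ihA i x) (ihB i x)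
  | or A B ihA ihB => intro i x; exact or_congr (ihA i x) (ihB i x)
  | box A ih =>
    intro i x
    constructor
    · intro h y hy
      exact (ih i y).1 (h (some ⟨i, y⟩) (SumR.inner i x y hy))
    · intro h v hv
      cases hv with
      | inner i x y h' => exact (ih i y).2 (h y h')
  | dia A ih =>
    intro i x
    constructor
    · intro ⟨v, hv, hsat⟩
      cases hv with
      | inner i x y h' => exact ⟨y, h', (ih i y).1 hsat⟩
    · intro ⟨y, hy, hsat⟩
      exact ⟨some ⟨i, y⟩, SumR.inner i x y hy, (ih i y).2 hsat⟩

end Sum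

/-! #### Closure -/

def sub : Fml → Finset Fml
  | .and A B => insert (.and A B) (sub A ∪ sub B)
  | .or A B => insert (.or A B) (sub A ∪ sub B)
  | .box A => insert (.box A) (sub A)
  | .dia A => insert (.dia A) (sub A)
  | X => {X}

lemma mem_sub_self (A : Fml) : A ∈ sub A := by
  cases A <;> simp [sub]

lemma sub_trans : ∀ A B : Fml, B ∈ sub A → ∀ X, X ∈ sub B → X ∈ sub A := by
  intro A
  induction A with
  | and A1 A2 ih1 ih2 =>
    intro B hB X hX
    simp only [sub, Finset.mem_insert, Finset.mem_union] at hB ⊢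
    rcases hB with rfl | hB | hB
    · simp only [sub, Finset.mem_insert, Finset.mem_union] at hX; exact hX
    · exact Or.inr (Or.inl (ih1 B hB X hX))
    · exact Or.inr (Or.inr (ih2 B hB X hX))
  | or A1 A2 ih1 ih2 =>
    intro B hB X hX
    simp only [sub, Finset.mem_insert, Finset.mem_union] at hB ⊢
    rcases hB with rfl | hB | hB
    · simp only [sub, Finset.mem_insert, Finset.mem_union] at hX; exact hX
    · exact Or.inr (Or.inl (ih1 B hB X hX))
    · exact Or.inr (Or.inr (ih2 B hB X hX))
  | box A1 ih1 =>
    intro B hB X hX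
    simp only [sub, Finset.mem_insert] at hB ⊢
    rcases hB with rfl | hB
    · simp only [sub, Finset.mem_insert] at hX; exact hX
    · exact Or.inr (ih1 B hB X hX)
  | dia A1 ih1 =>
    intro B hB X hX
    simp only [sub, Finset.mem_insert] at hB ⊢
    rcases hB with rfl | hB
    · simp only [sub, Finset.mem_insert] at hX; exact hX
    · exact Or.inr (ih1 B hB X hX)
  | pos n => intro B hB X hX; simp only [sub, Finset.mem_singleton] at hB; subst hB; exact hX
  | neg n => intro B hB X hX; simp only [sub, Finset.mem_singleton] at hB; subst hB; exact hX
  | top => intro B hB X hX; simp only [sub, Finset.mem_singleton] at hB; subst hB; exact hX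
  | bot => intro B hB X hX; simp only [sub, Finset.mem_singleton] at hB; subst hB; exact hX

lemma sub_negation : ∀ A : Fml, sub A.negation = (sub A).image Fml.negation := by
  intro A
  induction A with
  | pos n => simp [Fml.negation, sub]
  | neg n => simp [Fml.negation, sub]
  | top => simp [Fml.negation, sub]
  | bot => simp [Fml.negation, sub]
  | and A B ihA ihB =>
    simp [Fml.negation, sub, ihA, ihB, Finset.image_insert, Finset.image_union]
  | or A B ihA ihB =>
    simp [Fml.negation, sub, ihA, ihB, Finset.image_insert, Finset.image_union]
  | box A ih => simp [Fml.negation, sub, ih, Finset.image_insert]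
  | dia A ih => simp [Fml.negation, sub, ih, Finset.image_insert]

def Closed (C : Finset Fml) : Prop :=
  (∀ A B, Fml.and A B ∈ C → A ∈ C ∧ B ∈ C) ∧
  (∀ A B, Fml.or A B ∈ C → A ∈ C ∧ B ∈ C) ∧
  (∀ A, Fml.box A ∈ C → A ∈ C ∧ Fml.dia A.negation ∈ C) ∧
  (∀ A, Fml.dia A ∈ C → A ∈ C)

lemma mem_sub_and_left (A B : Fml) : A ∈ sub (Fml.and A B) := by
  simp [sub, mem_sub_self]
lemma mem_sub_and_right (A B : Fml) : B ∈ sub (Fml.and A B) := by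
  simp [sub, mem_sub_self]
lemma mem_sub_or_left (A B : Fml) : A ∈ sub (Fml.or A B) := by
  simp [sub, mem_sub_self]
lemma mem_sub_or_right (A B : Fml) : B ∈ sub (Fml.or A B) := by
  simp [sub, mem_sub_self]
lemma mem_sub_box (A : Fml) : A ∈ sub (Fml.box A) := by
  simp [sub, mem_sub_self]
lemma mem_sub_dia (A : Fml) : A ∈ sub (Fml.dia A) := by
  simp [sub, mem_sub_self]

lemma exists_closed (Γ : Sequent) : ∃ C : Finset Fml, Closed C ∧ ∀ A ∈ Γ, A ∈ C := by
  classical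
  set S0 : Finset Fml := Γ.toFinset.biUnion sub with hS0
  have hsubcl : ∀ X ∈ S0, ∀ Y ∈ sub X, Y ∈ S0 := by
    intro X hX Y hY
    simp only [hS0, Finset.mem_biUnion] at hX ⊢
    obtain ⟨A, hA, hXA⟩ := hX
    exact ⟨A, hA, sub_trans A X hXA Y hY⟩
  refine ⟨S0 ∪ S0.image Fml.negation, ?_, ?_⟩
  swap
  · intro A hA
    exact Finset.mem_union_left _
      (Finset.mem_biUnion.2 ⟨A, Multiset.mem_toFinset.2 hA, mem_sub_self A⟩)
  have key : ∀ X ∈ S0 ∪ S0.image Fml.negation, ∀ Y ∈ sub X,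
      Y ∈ S0 ∪ S0.image Fml.negation := by
    intro X hX Y hY
    rcases Finset.mem_union.1 hX with hX | hX
    · exact Finset.mem_union_left _ (hsubcl X hX Y hY)
    · obtain ⟨Z, hZ, rfl⟩ := Finset.mem_image.1 hX
      rw [sub_negation] at hY
      obtain ⟨Y', hY', rfl⟩ := Finset.mem_image.1 hY
      exact Finset.mem_union_right _ (Finset.mem_image_of_mem _ (hsubcl Z hZ Y' hY'))
  have keyneg : ∀ X ∈ S0 ∪ S0.image Fml.negation,
      X.negation ∈ S0 ∪ S0.image Fml.negation := by
    intro X hX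
    rcases Finset.mem_union.1 hX with hX | hX
    · exact Finset.mem_union_right _ (Finset.mem_image_of_mem _ hX)
    · obtain ⟨Z, hZ, rfl⟩ := Finset.mem_image.1 hX
      rw [negation_negation]
      exact Finset.mem_union_left _ hZ
  refine ⟨?_, ?_, ?_, ?_⟩
  · intro A B hAB
    exact ⟨key _ hAB A (mem_sub_and_left A B), key _ hAB B (mem_sub_and_right A B)⟩
  · intro A B hAB
    exact ⟨key _ hAB A (mem_sub_or_left A B), key _ hAB B (mem_sub_or_right A B)⟩
  · intro A hA
    refine ⟨key _ hA A (mem_sub_box A), ?_⟩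
    have := keyneg _ hA
    simpa [Fml.negation] using this
  · intro A hA
    exact key _ hA A (mem_sub_dia A)

/-! #### Countermodel helpers -/

def isDiaB : Fml → Bool
  | .dia _ => true
  | _ => false

/-- The formulas under a diamond in Δ. -/
def DS (Δ : Sequent) : Finset Fml :=
  Δ.toFinset.biUnion (fun X => match X with | .dia B => {B} | _ => ∅)

lemma mem_DS {B : Fml} {Δ : Sequent} : B ∈ DS Δ ↔ Fml.dia B ∈ Δ := by
  simp only [DS, Finset.mem_biUnion, Multiset.mem_toFinset]
  constructor
  · rintro ⟨X, hX, hB⟩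
    cases X <;> simp at hB
    subst hB; exact hX
  · intro h; exact ⟨Fml.dia B, h, by simp⟩

lemma dia_inj : Function.Injective Fml.dia := by
  intro a b h; injection h

lemma diaS_le {F : Finset Fml} {Δ' : Sequent} (h : ∀ B ∈ F, Fml.dia B ∈ Δ') :
    diaS F.val ≤ Δ' := by
  rw [Multiset.le_iff_count]
  intro x
  by_cases hx : x ∈ diaS F.val
  · have hnd : (diaS F.val).Nodup := Multiset.Nodup.map dia_inj F.nodup
    have h1 : (diaS F.val).count x = 1 := Multiset.count_eq_one_of_mem hnd hx
    obtain ⟨B, hB, rfl⟩ := Multiset.mem_map.1 hx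
    have : Fml.dia B ∈ Δ' := h B (Finset.mem_def.2 hB)
    have := Multiset.one_le_count_iff_mem.2 this
    omega
  · rw [Multiset.count_eq_zero_of_notMem hx]
    omega

lemma DS_card_le (C : Finset Fml) (Δ : Sequent) (h : ∀ A ∈ Δ, A ∈ C) :
    (DS Δ).card ≤ (C.filter (fun X => isDiaB X)).card := by
  apply Finset.card_le_card_of_injOn Fml.dia
  · intro B hB
    exact Finset.mem_filter.2 ⟨h _ (mem_DS.1 hB), rfl⟩
  · intro a _ b _ hab; exact dia_inj hab

lemma pair_extract {Δ : Sequent} {A B : Fml} (hAB : A ≠ B) (hA : A ∈ Δ) (hB : B ∈ Δ) :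
    ∃ rest, Δ = A ::ₘ B ::ₘ rest := by
  refine ⟨(Δ.erase A).erase B, ?_⟩
  rw [Multiset.cons_erase ((Multiset.mem_erase_of_ne (Ne.symm hAB)).2 hB),
    Multiset.cons_erase hA]

lemma countermodel_seq (C : Finset Fml) (hC : Closed C) :
    ∀ d s (Δ : Sequent), ((C.filter (fun X => isDiaB X)).card - (DS Δ).card) ≤ d →
      seqsize Δ ≤ s → (∀ A ∈ Δ, A ∈ C) → ¬ GLSeq Δ →
      ∃ (M : KM) (w : M.W), ∀ A ∈ Δ, ¬ Sat M A w := by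
  intro d
  induction d using Nat.strong_induction_on with
  | _ d ihd =>
  intro s
  induction s using Nat.strong_induction_on with
  | _ s ihs =>
  intro Δ hd hs hmem hnd
  by_cases htop : Fml.top ∈ Δ
  · exact absurd (by
      obtain ⟨rest, hrest⟩ := Multiset.exists_cons_of_mem htop
      rw [hrest]; exact GLSeq.axTop rest) hnd
  by_cases hand : ∃ A B, Fml.and A B ∈ Δ
  · obtain ⟨A, B, hAB⟩ := hand
    have hΔeq : Δ = Fml.and A B ::ₘ Δ.erase (Fml.and A B) := (Multiset.cons_erase hAB).symm
    set Δ₀ := Δ.erase (Fml.and A B) with hΔ₀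
    have hDSmono : ∀ X : Fml, (DS Δ).card ≤ (DS (X ::ₘ Δ₀)).card := by
      intro X
      apply Finset.card_le_card
      intro B' hB'
      have : Fml.dia B' ∈ Δ := mem_DS.1 hB'
      rw [hΔeq] at this
      rcases Multiset.mem_cons.1 this with h | h
      · exact absurd h (by simp)
      · exact mem_DS.2 (Multiset.mem_cons_of_mem h)
    have hC0 : ∀ X ∈ Δ₀, X ∈ C := fun X hX => hmem X (by rw [hΔeq]; exact Multiset.mem_cons_of_mem hX)
    have hCA : A ∈ C := (hC.1 A B (hmem _ hAB)).1
    have hCB : B ∈ C := (hC.1 A B (hmem _ hAB)).2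
    have hnp : ¬ GLSeq (A ::ₘ Δ₀) ∨ ¬ GLSeq (B ::ₘ Δ₀) := by
      by_contra hcc; push_neg at hcc
      exact hnd (hΔeq ▸ GLSeq.andR hcc.1 hcc.2)
    have hsz : seqsize Δ = fsize (Fml.and A B) + seqsize Δ₀ := by
      rw [hΔeq, seqsize_cons]
    rcases hnp with hnp | hnp
    · have hslt : seqsize (A ::ₘ Δ₀) < s := by
        rw [seqsize_cons]
        have : fsize A < fsize (Fml.and A B) := by simp only [fsize]; omega
        omega
      obtain ⟨M, w, hfals⟩ := ihs _ hslt (A ::ₘ Δ₀)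
        (le_trans (Nat.sub_le_sub_left (hDSmono A) _) hd) le_rfl
        (by intro X hX; rcases Multiset.mem_cons.1 hX with rfl | hX; exacts [hCA, hC0 X hX]) hnp
      refine ⟨M, w, ?_⟩
      intro X hX
      rw [hΔeq] at hX
      rcases Multiset.mem_cons.1 hX with rfl | hX
      · intro hsat
        exact hfals A (Multiset.mem_cons_self _ _) hsat.1
      · exact hfals X (Multiset.mem_cons_of_mem hX)
    · have hslt : seqsize (B ::ₘ Δ₀) < s := by
        rw [seqsize_cons]
        have : fsize B < fsize (Fml.and A B) := by simp only [fsize]; omega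
        omega
      obtain ⟨M, w, hfals⟩ := ihs _ hslt (B ::ₘ Δ₀)
        (le_trans (Nat.sub_le_sub_left (hDSmono B) _) hd) le_rfl
        (by intro X hX; rcases Multiset.mem_cons.1 hX with rfl | hX; exacts [hCB, hC0 X hX]) hnp
      refine ⟨M, w, ?_⟩
      intro X hX
      rw [hΔeq] at hX
      rcases Multiset.mem_cons.1 hX with rfl | hX
      · intro hsat
        exact hfals B (Multiset.mem_cons_self _ _) hsat.2
      · exact hfals X (Multiset.mem_cons_of_mem hX)
  by_cases hor : ∃ A B, Fml.or A B ∈ Δ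
  · obtain ⟨A, B, hAB⟩ := hor
    have hΔeq : Δ = Fml.or A B ::ₘ Δ.erase (Fml.or A B) := (Multiset.cons_erase hAB).symm
    set Δ₀ := Δ.erase (Fml.or A B) with hΔ₀
    have hDSmono : (DS Δ).card ≤ (DS (A ::ₘ B ::ₘ Δ₀)).card := by
      apply Finset.card_le_card
      intro B' hB'
      have : Fml.dia B' ∈ Δ := mem_DS.1 hB'
      rw [hΔeq] at this
      rcases Multiset.mem_cons.1 this with h | h
      · exact absurd h (by simp)
      · exact mem_DS.2 (Multiset.mem_cons_of_mem (Multiset.mem_cons_of_mem h))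
    have hC0 : ∀ X ∈ Δ₀, X ∈ C := fun X hX => hmem X (by rw [hΔeq]; exact Multiset.mem_cons_of_mem hX)
    have hCA : A ∈ C := (hC.2.1 A B (hmem _ hAB)).1
    have hCB : B ∈ C := (hC.2.1 A B (hmem _ hAB)).2
    have hnp : ¬ GLSeq (A ::ₘ B ::ₘ Δ₀) := fun hp => hnd (hΔeq ▸ GLSeq.orR hp)
    have hslt : seqsize (A ::ₘ B ::ₘ Δ₀) < s := by
      have : seqsize Δ = fsize (Fml.or A B) + seqsize Δ₀ := by rw [hΔeq, seqsize_cons]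
      rw [seqsize_cons, seqsize_cons]
      have h2 : fsize A + fsize B < fsize (Fml.or A B) := by simp only [fsize]; omega
      omega
    obtain ⟨M, w, hfals⟩ := ihs _ hslt (A ::ₘ B ::ₘ Δ₀)
      (le_trans (Nat.sub_le_sub_left hDSmono _) hd) le_rfl
      (by
        intro X hX
        rcases Multiset.mem_cons.1 hX with rfl | hX
        · exact hCA
        rcases Multiset.mem_cons.1 hX with rfl | hX
        · exact hCB
        · exact hC0 X hX) hnp
    refine ⟨M, w, ?_⟩
    intro X hX
    rw [hΔeq] at hX
    rcases Multiset.mem_cons.1 hX with rfl | hX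
    · intro hsat
      rcases hsat with h | h
      · exact hfals A (Multiset.mem_cons_self _ _) h
      · exact hfals B (Multiset.mem_cons_of_mem (Multiset.mem_cons_self _ _)) h
    · exact hfals X (Multiset.mem_cons_of_mem (Multiset.mem_cons_of_mem hX))
  -- box stage
  push_neg at hand hor
  have hcons : ∀ n, ¬ (Fml.pos n ∈ Δ ∧ Fml.neg n ∈ Δ) := by
    rintro n ⟨h1, h2⟩
    obtain ⟨rest, hrest⟩ := pair_extract (by simp) h1 h2
    exact hnd (hrest ▸ GLSeq.axA rest (Fml.pos n))
  set D' : Multiset Fml := (DS Δ).val with hD'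
  have hch : ∀ A : Fml, Fml.box A ∈ Δ →
      ∃ (N : KM) (w : N.W),
        ∀ B ∈ (A ::ₘ Fml.dia A.negation ::ₘ (D' + diaS D')), ¬ Sat N B w := by
    intro A hA
    have hΔeq : Δ = Fml.box A ::ₘ Δ.erase (Fml.box A) := (Multiset.cons_erase hA).symm
    set Δ₀ := Δ.erase (Fml.box A) with hΔ₀
    have hdia_sub : diaS D' ≤ Δ₀ := by
      apply diaS_le
      intro B hB
      have : Fml.dia B ∈ Δ := mem_DS.1 hB
      exact (Multiset.mem_erase_of_ne (by simp)).2 this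
    have hderive : GLSeq (A ::ₘ Fml.dia A.negation ::ₘ (D' + diaS D')) → GLSeq Δ := by
      intro hp
      rw [hΔeq, ← add_tsub_cancel_of_le hdia_sub]
      exact GLSeq.boxGL hp
    have hprem_nd : ¬ GLSeq (A ::ₘ Fml.dia A.negation ::ₘ (D' + diaS D')) :=
      fun hp => hnd (hderive hp)
    have hAbar_not : Fml.dia A.negation ∉ Δ := by
      intro hdAb
      apply hnd
      apply hderive
      have hmemT : A.negation ∈ (Fml.dia A.negation ::ₘ (D' + diaS D')) := by
        refine Multiset.mem_cons_of_mem (Multiset.mem_add.2 (Or.inl ?_))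
        exact Finset.mem_def.1 (mem_DS.2 hdAb)
      have heq : (A ::ₘ Fml.dia A.negation ::ₘ (D' + diaS D')) =
          A ::ₘ A.negation ::ₘ (Fml.dia A.negation ::ₘ (D' + diaS D')).erase A.negation := by
        rw [Multiset.cons_erase hmemT]
      rw [heq]
      exact GLSeq.axA _ A
    have hsubC : ∀ B ∈ (A ::ₘ Fml.dia A.negation ::ₘ (D' + diaS D')), B ∈ C := by
      intro B hB
      rcases Multiset.mem_cons.1 hB with rfl | hB
      · exact (hC.2.2.1 B (hmem _ hA)).1
      rcases Multiset.mem_cons.1 hB with rfl | hB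
      · exact (hC.2.2.1 A (hmem _ hA)).2
      rcases Multiset.mem_add.1 hB with hB | hB
      · exact hC.2.2.2 B (hmem _ (mem_DS.1 (Finset.mem_def.2 hB)))
      · obtain ⟨B', hB', rfl⟩ := Multiset.mem_map.1 hB
        exact hmem _ (mem_DS.1 (Finset.mem_def.2 hB'))
    have hcard : (C.filter (fun X => isDiaB X)).card -
        (DS (A ::ₘ Fml.dia A.negation ::ₘ (D' + diaS D'))).card < d := by
      set ch := A ::ₘ Fml.dia A.negation ::ₘ (D' + diaS D') with hch'
      have h1 : insert A.negation (DS Δ) ⊆ DS ch := by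
        intro B hB
        rcases Finset.mem_insert.1 hB with rfl | hB
        · exact mem_DS.2 (Multiset.mem_cons_of_mem (Multiset.mem_cons_self _ _))
        · refine mem_DS.2 (Multiset.mem_cons_of_mem (Multiset.mem_cons_of_mem
            (Multiset.mem_add.2 (Or.inr ?_))))
          exact Multiset.mem_map_of_mem _ (Finset.mem_def.1 hB)
      have h2 : (DS Δ).card + 1 ≤ (DS ch).card := by
        have := Finset.card_le_card h1
        rwa [Finset.card_insert_of_notMem (fun h => hAbar_not (mem_DS.1 h))] at this
      have h3 : (DS ch).card ≤ (C.filter (fun X => isDiaB X)).card := DS_card_le C ch hsubC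
      omega
    exact ihd _ hcard (seqsize (A ::ₘ Fml.dia A.negation ::ₘ (D' + diaS D')))
      _ le_rfl le_rfl hsubC hprem_nd
  have hch' : ∀ i : {A : Fml // Fml.box A ∈ Δ},
      ∃ (N : KM) (w : N.W),
        ∀ B ∈ (i.1 ::ₘ Fml.dia i.1.negation ::ₘ (D' + diaS D')), ¬ Sat N B w :=
    fun i => hch i.1 i.2
  choose Ns ws0 hws using hch'
  refine ⟨sumKM Ns ws0 (fun n => Fml.pos n ∉ Δ), none, ?_⟩
  intro A hA
  cases A with
  | pos n => intro hsat; exact hsat hA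
  | neg n => intro hsat; exact hcons n ⟨not_not.1 hsat, hA⟩
  | top => exact absurd hA htop
  | bot => exact fun h => h
  | and A B => exact absurd hA (hand A B)
  | or A B => exact absurd hA (hor A B)
  | box A =>
    intro hsat
    have hs1 : Sat (sumKM Ns ws0 (fun n => Fml.pos n ∉ Δ)) A
        (some ⟨⟨A, hA⟩, ws0 ⟨A, hA⟩⟩) := hsat _ (SumR.root _ _ (Or.inl rfl))
    exact hws ⟨A, hA⟩ A (Multiset.mem_cons_self _ _) ((sat_sum Ns ws0 _ A _ _).1 hs1)
  | dia B =>
    intro hsat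
    obtain ⟨v, hv, hsB⟩ := hsat
    cases hv with
    | root i x hx =>
      have hBD : B ∈ DS Δ := mem_DS.2 hA
      have hBch : B ∈ (i.1 ::ₘ Fml.dia i.1.negation ::ₘ (D' + diaS D')) :=
        Multiset.mem_cons_of_mem (Multiset.mem_cons_of_mem
          (Multiset.mem_add.2 (Or.inl (Finset.mem_def.1 hBD))))
      have hdBch : Fml.dia B ∈ (i.1 ::ₘ Fml.dia i.1.negation ::ₘ (D' + diaS D')) :=
        Multiset.mem_cons_of_mem (Multiset.mem_cons_of_mem
          (Multiset.mem_add.2 (Or.inr (Multiset.mem_map_of_mem _ (Finset.mem_def.1 hBD)))))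
      rcases hx with rfl | hx
      · exact hws i B hBch ((sat_sum Ns ws0 _ B _ _).1 hsB)
      · exact hws i (Fml.dia B) hdBch ⟨x, hx, (sat_sum Ns ws0 _ B _ _).1 hsB⟩

lemma valid_to_seq {Γ : Sequent} (h : ValidS Γ) : GLSeq Γ := by
  by_contra hnd
  obtain ⟨C, hC, hmemC⟩ := exists_closed Γ
  obtain ⟨M, w, hfals⟩ := countermodel_seq C hC _ _ Γ le_rfl le_rfl hmemC hnd
  obtain ⟨A, hA, hsat⟩ := h M w
  exact hfals A hA hsat

lemma card_le_seqsize (s : Sequent) : Multiset.card s ≤ seqsize s := by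
  induction s using Multiset.induction with
  | empty => simp [seqsize]
  | cons a s ih =>
    rw [seqsize_cons]
    have := fsize_pos a
    simp only [Multiset.card_cons]
    omega

lemma finite_bounded (C : Finset Fml) :
    ∀ K, {s : Multiset Fml | (∀ A ∈ s, A ∈ C) ∧ Multiset.card s ≤ K}.Finite := by
  intro K
  induction K with
  | zero =>
    apply Set.Finite.subset (Set.finite_singleton (0 : Multiset Fml))
    rintro s ⟨_, hcard⟩
    simp only [Set.mem_singleton_iff]
    exact Multiset.card_eq_zero.1 (Nat.le_zero.1 hcard)
  | succ K ih =>
    apply Set.Finite.subset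
      (Set.Finite.insert (0 : Multiset Fml)
        (Set.Finite.biUnion C.finite_toSet
          (fun a _ => Set.Finite.image (fun t => a ::ₘ t) ih)))
    rintro s ⟨hmem, hcard⟩
    rcases Multiset.empty_or_exists_mem s with rfl | ⟨a, ha⟩
    · exact Set.mem_insert _ _
    · refine Set.mem_insert_of_mem _ ?_
      refine Set.mem_biUnion (hmem a ha) ?_
      refine ⟨s.erase a, ⟨?_, ?_⟩, Multiset.cons_erase ha⟩
      · intro A hA; exact hmem A (Multiset.mem_of_mem_erase hA)
      · have h1 := Multiset.card_erase_of_mem ha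
        have h2 : 0 < Multiset.card s := Multiset.card_pos.2 (fun h => by subst h; simp at ha)
        rw [h1, Nat.pred_eq_sub_one]
        omega

lemma countermodel_circ (C : Finset Fml) (hC : Closed C) (K : ℕ)
    (hK : (∑ X ∈ C, (2 * fsize X + 1)) + (∑ X ∈ C, (2 * fsize X + 1)) ≤ K) :
    ∀ n (H : List Sequent) (Δ : Sequent),
      (((finite_bounded C K).toFinset \ H.toFinset).card ≤ n) →
      (∀ A ∈ Δ, A ∈ C) → seqsize Δ ≤ K → ¬ GLCircAux H Δ →
      ∃ (M : KM) (w : M.W), ∀ A ∈ Δ, ¬ Sat M A w := by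
  classical
  set KC := ∑ X ∈ C, (2 * fsize X + 1) with hKC
  set SF := (finite_bounded C K).toFinset with hSF
  have hmeas : ∀ (H : List Sequent) (Δ' : Sequent), Δ' ∉ H → (∀ A ∈ Δ', A ∈ C) →
      seqsize Δ' ≤ K → (SF \ (Δ' :: H).toFinset).card < (SF \ H.toFinset).card := by
    intro H Δ' hnH h1 h2
    apply Finset.card_lt_card
    rw [Finset.ssubset_def]
    constructor
    · apply Finset.sdiff_subset_sdiff (Finset.Subset.refl _)
      rw [List.toFinset_cons]
      exact Finset.subset_insert _ _
    · intro hcon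
      have hΔ'in : Δ' ∈ SF \ H.toFinset := by
        rw [Finset.mem_sdiff]
        refine ⟨(Set.Finite.mem_toFinset _).2 ⟨h1, le_trans (card_le_seqsize Δ') h2⟩, ?_⟩
        simp only [List.mem_toFinset]
        exact hnH
      have := hcon hΔ'in
      rw [Finset.mem_sdiff, List.toFinset_cons] at this
      exact this.2 (Finset.mem_insert_self _ _)
  intro n
  induction n using Nat.strong_induction_on with
  | _ n ihn =>
  intro H Δ hn hmem hszK hnd
  have hnotinH : Δ ∉ H := fun h => hnd (GLCircAux.back h)
  by_cases htop : Fml.top ∈ Δ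
  · exact absurd (by
      obtain ⟨rest, hrest⟩ := Multiset.exists_cons_of_mem htop
      rw [hrest]; exact GLCircAux.axTop H rest) hnd
  by_cases hand : ∃ A B, Fml.and A B ∈ Δ
  · obtain ⟨A, B, hAB⟩ := hand
    obtain ⟨Δ₀, hΔeq⟩ := Multiset.exists_cons_of_mem hAB
    subst hΔeq
    have hCA : A ∈ C := (hC.1 A B (hmem _ (Multiset.mem_cons_self _ _))).1
    have hCB : B ∈ C := (hC.1 A B (hmem _ (Multiset.mem_cons_self _ _))).2
    have hnp : ¬ GLCircAux ((Fml.and A B ::ₘ Δ₀) :: H) (A ::ₘ Δ₀) ∨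
        ¬ GLCircAux ((Fml.and A B ::ₘ Δ₀) :: H) (B ::ₘ Δ₀) := by
      by_contra hcc; push_neg at hcc
      exact hnd (GLCircAux.andR hcc.1 hcc.2)
    have hmeaslt := hmeas H _ hnotinH hmem hszK
    have hszA : seqsize (A ::ₘ Δ₀) ≤ K := by
      rw [seqsize_cons] at hszK ⊢
      have : fsize A < fsize (Fml.and A B) := by simp only [fsize]; omega
      omega
    have hszB : seqsize (B ::ₘ Δ₀) ≤ K := by
      rw [seqsize_cons] at hszK ⊢
      have : fsize B < fsize (Fml.and A B) := by simp only [fsize]; omega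
      omega
    have hC0 : ∀ X ∈ Δ₀, X ∈ C := fun X hX => hmem X (Multiset.mem_cons_of_mem hX)
    rcases hnp with hnp | hnp
    · obtain ⟨M, w, hfals⟩ := ihn _ (lt_of_lt_of_le hmeaslt hn) _ (A ::ₘ Δ₀) le_rfl
        (by intro X hX; rcases Multiset.mem_cons.1 hX with rfl | hX; exacts [hCA, hC0 X hX])
        hszA hnp
      refine ⟨M, w, ?_⟩
      intro X hX
      rcases Multiset.mem_cons.1 hX with rfl | hX
      · intro hsat; exact hfals A (Multiset.mem_cons_self _ _) hsat.1
      · exact hfals X (Multiset.mem_cons_of_mem hX)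
    · obtain ⟨M, w, hfals⟩ := ihn _ (lt_of_lt_of_le hmeaslt hn) _ (B ::ₘ Δ₀) le_rfl
        (by intro X hX; rcases Multiset.mem_cons.1 hX with rfl | hX; exacts [hCB, hC0 X hX])
        hszB hnp
      refine ⟨M, w, ?_⟩
      intro X hX
      rcases Multiset.mem_cons.1 hX with rfl | hX
      · intro hsat; exact hfals B (Multiset.mem_cons_self _ _) hsat.2
      · exact hfals X (Multiset.mem_cons_of_mem hX)
  by_cases hor : ∃ A B, Fml.or A B ∈ Δ
  · obtain ⟨A, B, hAB⟩ := hor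
    obtain ⟨Δ₀, hΔeq⟩ := Multiset.exists_cons_of_mem hAB
    subst hΔeq
    have hCA : A ∈ C := (hC.2.1 A B (hmem _ (Multiset.mem_cons_self _ _))).1
    have hCB : B ∈ C := (hC.2.1 A B (hmem _ (Multiset.mem_cons_self _ _))).2
    have hnp : ¬ GLCircAux ((Fml.or A B ::ₘ Δ₀) :: H) (A ::ₘ B ::ₘ Δ₀) :=
      fun hp => hnd (GLCircAux.orR hp)
    have hmeaslt := hmeas H _ hnotinH hmem hszK
    have hszAB : seqsize (A ::ₘ B ::ₘ Δ₀) ≤ K := by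
      rw [seqsize_cons] at hszK
      rw [seqsize_cons, seqsize_cons]
      have : fsize A + fsize B < fsize (Fml.or A B) := by simp only [fsize]; omega
      omega
    have hC0 : ∀ X ∈ Δ₀, X ∈ C := fun X hX => hmem X (Multiset.mem_cons_of_mem hX)
    obtain ⟨M, w, hfals⟩ := ihn _ (lt_of_lt_of_le hmeaslt hn) _ (A ::ₘ B ::ₘ Δ₀) le_rfl
      (by
        intro X hX
        rcases Multiset.mem_cons.1 hX with rfl | hX
        · exact hCA
        rcases Multiset.mem_cons.1 hX with rfl | hX
        · exact hCB
        · exact hC0 X hX)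
      hszAB hnp
    refine ⟨M, w, ?_⟩
    intro X hX
    rcases Multiset.mem_cons.1 hX with rfl | hX
    · intro hsat
      rcases hsat with hs | hs
      · exact hfals A (Multiset.mem_cons_self _ _) hs
      · exact hfals B (Multiset.mem_cons_of_mem (Multiset.mem_cons_self _ _)) hs
    · exact hfals X (Multiset.mem_cons_of_mem (Multiset.mem_cons_of_mem hX))
  -- box stage
  push_neg at hand hor
  have hcons : ∀ m, ¬ (Fml.pos m ∈ Δ ∧ Fml.neg m ∈ Δ) := by
    rintro m ⟨h1, h2⟩
    obtain ⟨rest, hrest⟩ := pair_extract (by simp) h1 h2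
    exact hnd (hrest ▸ GLCircAux.axA H rest (Fml.pos m))
  set D' : Multiset Fml := (DS Δ).val with hD'
  have hDSsubC : DS Δ ⊆ C := fun B hB => hC.2.2.2 B (hmem _ (mem_DS.1 hB))
  have hch : ∀ A : Fml, Fml.box A ∈ Δ →
      ∃ (N : KM) (w : N.W), ∀ B ∈ (A ::ₘ (D' + diaS D')), ¬ Sat N B w := by
    intro A hA
    have hΔeq : Δ = Fml.box A ::ₘ Δ.erase (Fml.box A) := (Multiset.cons_erase hA).symm
    set Δ₀ := Δ.erase (Fml.box A) with hΔ₀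
    have hdia_sub : diaS D' ≤ Δ₀ := by
      apply diaS_le
      intro B hB
      exact (Multiset.mem_erase_of_ne (by simp)).2 (mem_DS.1 hB)
    have hrw : Fml.box A ::ₘ (diaS D' + (Δ₀ - diaS D')) = Δ := by
      rw [add_tsub_cancel_of_le hdia_sub]
      exact hΔeq.symm
    have hprem_nd : ¬ GLCircAux (Δ :: H) (A ::ₘ (D' + diaS D')) := by
      intro hp
      have hstep : GLCircAux H (Fml.box A ::ₘ (diaS D' + (Δ₀ - diaS D'))) := by
        refine GLCircAux.boxR ?_
        rw [hrw]
        exact hp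
      exact hnd (hrw ▸ hstep)
    have hsubC : ∀ B ∈ (A ::ₘ (D' + diaS D')), B ∈ C := by
      intro B hB
      rcases Multiset.mem_cons.1 hB with rfl | hB
      · exact (hC.2.2.1 B (hmem _ hA)).1
      rcases Multiset.mem_add.1 hB with hB | hB
      · exact hDSsubC (Finset.mem_def.2 hB)
      · obtain ⟨B', hB', rfl⟩ := Multiset.mem_map.1 hB
        exact hmem _ (mem_DS.1 (Finset.mem_def.2 hB'))
    have hsz_child : seqsize (A ::ₘ (D' + diaS D')) ≤ K := by
      rw [seqsize_cons, seqsize_add]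
      have e1 : seqsize D' = ∑ B ∈ DS Δ, fsize B := rfl
      have e2 : seqsize (diaS D') = ∑ B ∈ DS Δ, (fsize B + 1) := by
        show ((D'.map Fml.dia).map fsize).sum = _
        rw [Multiset.map_map]
        rfl
      have e3 : (∑ B ∈ DS Δ, fsize B) + (∑ B ∈ DS Δ, (fsize B + 1)) =
          ∑ B ∈ DS Δ, (2 * fsize B + 1) := by
        rw [← Finset.sum_add_distrib]
        apply Finset.sum_congr rfl
        intro x _
        ring
      have h1 : 2 * fsize A + 1 ≤ KC :=
        Finset.single_le_sum (f := fun X => 2 * fsize X + 1)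
          (fun i _ => Nat.zero_le _) ((hC.2.2.1 A (hmem _ hA)).1)
      have h2 : (∑ B ∈ DS Δ, (2 * fsize B + 1)) ≤ KC :=
        Finset.sum_le_sum_of_subset hDSsubC
      rw [e1, e2]
      omega
    exact ihn _ (lt_of_lt_of_le (hmeas H Δ hnotinH hmem hszK) hn) _
      (A ::ₘ (D' + diaS D')) le_rfl hsubC hsz_child hprem_nd
  have hch' : ∀ i : {A : Fml // Fml.box A ∈ Δ},
      ∃ (N : KM) (w : N.W), ∀ B ∈ (i.1 ::ₘ (D' + diaS D')), ¬ Sat N B w :=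
    fun i => hch i.1 i.2
  choose Ns ws0 hws using hch'
  refine ⟨sumKM Ns ws0 (fun m => Fml.pos m ∉ Δ), none, ?_⟩
  intro A hA
  cases A with
  | pos m => intro hsat; exact hsat hA
  | neg m => intro hsat; exact hcons m ⟨not_not.1 hsat, hA⟩
  | top => exact absurd hA htop
  | bot => exact fun hsat => hsat
  | and A B => exact absurd hA (hand A B)
  | or A B => exact absurd hA (hor A B)
  | box A =>
    intro hsat
    have hs1 : Sat (sumKM Ns ws0 (fun m => Fml.pos m ∉ Δ)) A
        (some ⟨⟨A, hA⟩, ws0 ⟨A, hA⟩⟩) := hsat _ (SumR.root _ _ (Or.inl rfl))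
    exact hws ⟨A, hA⟩ A (Multiset.mem_cons_self _ _) ((sat_sum Ns ws0 _ A _ _).1 hs1)
  | dia B =>
    intro hsat
    obtain ⟨v, hv, hsB⟩ := hsat
    cases hv with
    | root i x hx =>
      have hBD : B ∈ DS Δ := mem_DS.2 hA
      have hBch : B ∈ (i.1 ::ₘ (D' + diaS D')) :=
        Multiset.mem_cons_of_mem (Multiset.mem_add.2 (Or.inl (Finset.mem_def.1 hBD)))
      have hdBch : Fml.dia B ∈ (i.1 ::ₘ (D' + diaS D')) :=
        Multiset.mem_cons_of_mem
          (Multiset.mem_add.2 (Or.inr (Multiset.mem_map_of_mem _ (Finset.mem_def.1 hBD))))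
      rcases hx with rfl | hx
      · exact hws i B hBch ((sat_sum Ns ws0 _ B _ _).1 hsB)
      · exact hws i (Fml.dia B) hdBch ⟨x, hx, (sat_sum Ns ws0 _ B _ _).1 hsB⟩

lemma valid_to_circ {Γ : Sequent} (h : ValidS Γ) : GLCirc Γ := by
  by_contra hnd
  obtain ⟨C, hC, hmemC⟩ := exists_closed Γ
  set KC := ∑ X ∈ C, (2 * fsize X + 1) with hKC
  obtain ⟨M, w, hfals⟩ := countermodel_circ C hC (max (seqsize Γ) (KC + KC))
    (le_max_right _ _) _ [] Γ le_rfl hmemC (le_max_left _ _) hnd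
  obtain ⟨A, hA, hsat⟩ := h M w
  exact hfals A hA hsat

end GLDev

theorem three_systems_equivalent (Γ : Sequent) :
    (GLSeq Γ ↔ GLInf Γ) ∧ (GLInf Γ ↔ GLCirc Γ) := by
  constructor
  · constructor
    · exact fun h => GLDev.circ_to_inf (GLDev.valid_to_circ (GLDev.seq_to_valid h))
    · exact fun h => GLDev.valid_to_seq (GLDev.inf_to_valid h)
  · constructor
    · exact fun h => GLDev.valid_to_circ (GLDev.inf_to_valid h)
    · exact fun h => GLDev.circ_to_inf h
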